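/- For m ≥ 1 and n ≥ 0, f^{(m)}_n(x) = Σ_{k=0}^{⌊n/m⌋} C(n-(m-1)k, k) (-1)^k x^{n-mk}. -/

import Mathlib

theorem m_fib_poly_closed_form
    (m : ℕ) (hm : 1 ≤ m)
    (f : ℕ → ℝ → ℝ)
    (hlt : ∀ n, n < m → ∀ x, f n x = x ^ n)
    (hrec : ∀ n, m ≤ n → ∀ x, f n x = x * f (n - 1) x - f (n - m) x) :
    ∀ (n : ℕ) (x : ℝ),
      f n x = ∑ k ∈ Finset.range (n / m + 1),
        ((n - (m - 1) * k).choose k : ℝ) * (-1 : ℝ) ^ k * x ^ (n - m * k) := by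
  intro n
  induction n using Nat.strong_induction_on with
  | _ n ih =>
  intro x
  rcases lt_or_ge n m with h | h
  · rw [hlt n h x, Nat.div_eq_of_lt h]
    simp
  · have hmpos : 0 < m := hm
    have hq1 : 1 ≤ n / m := (Nat.one_le_div_iff hmpos).mpr h
    have hmq : m * (n / m) ≤ n := Nat.mul_div_le n m
    rw [hrec n h x, ih (n - 1) (by omega) x, ih (n - m) (by omega) x]
    -- extend the (n-1) sum to range (n/m + 1)
    have hext : ∑ k ∈ Finset.range ((n - 1) / m + 1),
          (((n - 1) - (m - 1) * k).choose k : ℝ) * (-1 : ℝ) ^ k * x ^ ((n - 1) - m * k)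
        = ∑ k ∈ Finset.range (n / m + 1),
          (((n - 1) - (m - 1) * k).choose k : ℝ) * (-1 : ℝ) ^ k * x ^ ((n - 1) - m * k) := by
      apply Finset.sum_subset
      · exact Finset.range_subset_range.mpr
          (Nat.add_le_add_right (Nat.div_le_div_right (Nat.sub_le n 1)) 1)
      · intro k hk hk'
        simp only [Finset.mem_range] at hk hk'
        have hlt2 : (n - 1) / m < k := Nat.lt_of_succ_le (Nat.not_lt.mp hk')
        have hn1 : n - 1 < k * m := (Nat.div_lt_iff_lt_mul hmpos).mp hlt2
        have hch : (n - 1) - (m - 1) * k < k := by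
          have h2 : k ≤ m * k := Nat.le_mul_of_pos_left k hmpos
          have hn1' : n - 1 < m * k := by rw [Nat.mul_comm]; exact hn1
          have h1k : 0 < k := Nat.lt_of_le_of_lt (Nat.zero_le _) hlt2
          rw [Nat.sub_mul, one_mul]
          generalize m * k = p at h2 hn1' ⊢
          omega
        rw [Nat.choose_eq_zero_of_lt hch]
        simp
    rw [hext, Finset.mul_sum]
    -- the (n-m) sum has range ((n-m)/m + 1) = range (n/m)
    have hnm : (n - m) / m + 1 = n / m := by
      have h1 : (n - m) / m = n / m - 1 := by
        rcases Nat.exists_eq_add_of_le h with ⟨c, rfl⟩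
        rw [Nat.add_sub_cancel_left, Nat.add_div_left _ hmpos]
        exact (Nat.add_sub_cancel _ _).symm
      rw [h1, Nat.sub_add_cancel hq1]
    rw [hnm]
    -- split off the k = 0 term of both range (n/m + 1) sums
    rw [Finset.sum_range_succ' (fun k => x * ((((n - 1) - (m - 1) * k).choose k : ℝ) *
          (-1 : ℝ) ^ k * x ^ ((n - 1) - m * k))),
        Finset.sum_range_succ' (fun k => (((n - (m - 1) * k).choose k : ℝ) *
          (-1 : ℝ) ^ k * x ^ (n - m * k)))]
    simp only [Nat.mul_zero, Nat.sub_zero, Nat.choose_zero_right, Nat.cast_one, pow_zero]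
    have h0 : x * ((1 : ℝ) * 1 * x ^ (n - 1)) = 1 * 1 * x ^ n := by
      rw [one_mul, one_mul, one_mul, ← pow_succ']
      congr 1
      omega
    have hmain : (∑ i ∈ Finset.range (n / m),
          x * ((((n - 1) - (m - 1) * (i + 1)).choose (i + 1) : ℝ) *
            (-1 : ℝ) ^ (i + 1) * x ^ ((n - 1) - m * (i + 1))))
        - (∑ k ∈ Finset.range (n / m),
          (((n - m - (m - 1) * k).choose k : ℝ) * (-1 : ℝ) ^ k * x ^ (n - m - m * k)))
        = ∑ i ∈ Finset.range (n / m),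
          (((n - (m - 1) * (i + 1)).choose (i + 1) : ℝ) *
            (-1 : ℝ) ^ (i + 1) * x ^ (n - m * (i + 1))) := by
      rw [← Finset.sum_sub_distrib]
      apply Finset.sum_congr rfl
      intro i hi
      simp only [Finset.mem_range] at hi
      have hik : i + 1 ≤ n / m := hi
      have hmk : m * (i + 1) ≤ n := le_trans (Nat.mul_le_mul_left m hik) hmq
      have hii : i ≤ m * i := Nat.le_mul_of_pos_left i hmpos
      have hmi : m * (i + 1) = m * i + m := by ring
      have hmk' : m * i + m ≤ n := by rw [← hmi]; exact hmk
      have e1 : n - m - m * i = n - m * (i + 1) := by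
        rw [hmi]
        generalize m * i = p
        omega
      have e2 : n - m - (m - 1) * i = n - 1 - (m - 1) * (i + 1) := by
        rw [Nat.sub_mul, Nat.sub_mul, one_mul, one_mul, hmi]
        generalize m * i = p at hmk' hii ⊢
        omega
      have e3 : n - (m - 1) * (i + 1) = (n - 1 - (m - 1) * (i + 1)) + 1 := by
        rw [Nat.sub_mul, one_mul, hmi]
        generalize m * i = p at hmk' hii ⊢
        omega
      rw [e1, e2, e3, Nat.choose_succ_succ]
      push_cast
      by_cases hc : m * (i + 1) < n
      · have ex : n - m * (i + 1) = ((n - 1) - m * (i + 1)) + 1 := by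
          rw [hmi] at hc ⊢
          generalize m * i = p at hc ⊢
          omega
        rw [ex, pow_succ]
        ring
      · have heq : m * (i + 1) = n := Nat.le_antisymm hmk (not_lt.mp hc)
        have hz : ((n - 1) - (m - 1) * (i + 1)).choose (i + 1) = 0 := by
          apply Nat.choose_eq_zero_of_lt
          rw [Nat.sub_mul, one_mul, heq]
          omega
        have hz0 : n - m * (i + 1) = 0 := by rw [heq]; omega
        rw [hz, hz0]
        push_cast
        ring
    linarith [hmain, h0]
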